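/- Let H = ℂ² with triple product 2{λ,μ,ν} = ⟨λ,μ⟩ν + ⟨ν,μ⟩λ (inner product conjugate-linear in the second variable). Define the real-linear map T : ℂ² → ℂ² by T(λ₁,λ₂) = (Re(λ₂), -Re(λ₁)). Then T{x,x,x} = 2{T x, x, x} + {x, T x, x} for all x ∈ ℂ². -/
import Mathlib


/-- The inner product on ℂ², linear in the first variable, conjugate-linear in the second. -/
def ipC (x y : ℂ × ℂ) : ℂ := x.1 * starRingEnd ℂ y.1 + x.2 * starRingEnd ℂ y.2

/-- The triple product {λ,μ,ν} = (1/2)(⟨λ,μ⟩ν + ⟨ν,μ⟩λ) on ℂ². -/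
noncomputable def tpC (x y z : ℂ × ℂ) : ℂ × ℂ :=
  (1/2 : ℂ) • (ipC x y • z + ipC z y • x)

/-- The real-linear map T(λ₁,λ₂) = (Re λ₂, -Re λ₁). -/
noncomputable def Tmap (p : ℂ × ℂ) : ℂ × ℂ := ((p.2.re : ℂ), -(p.1.re : ℂ))

theorem stmt_4 :
    ∀ x : ℂ × ℂ, Tmap (tpC x x x) = (2 : ℂ) • tpC (Tmap x) x x + tpC x (Tmap x) x := by
  rintro ⟨a, b⟩
  simp only [Tmap, tpC, ipC, Prod.ext_iff, Prod.smul_mk, Prod.mk_add_mk, smul_eq_mul,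
    Prod.fst_add, Prod.snd_add, Prod.smul_fst, Prod.smul_snd]
  constructor <;>
  · apply Complex.ext <;>
    simp [Complex.add_re, Complex.add_im, Complex.mul_re, Complex.mul_im, Complex.conj_re,
      Complex.conj_im, Complex.ofReal_re, Complex.ofReal_im, Complex.div_re, Complex.div_im,
      Complex.normSq] <;>
    ring
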